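/- Let Q₁ (n × r) and Q₂ (n × (n−r)) have orthonormal columns with Q₁ᵀQ₂ = 0, and let P be an (n−r) × r real matrix. Define Q̂ = (Q₁ + Q₂P)(I_r + PᵀP)^{−1/2}. Then ‖Q̂ − Q₁‖₂ ≤ 2‖P‖₂. -/

import Mathlib

open Matrix

noncomputable def frobNorm {m n : Type*} [Fintype m] [Fintype n] (A : Matrix m n ℝ) : ℝ :=
  Real.sqrt (∑ i, ∑ j, (A i j) ^ 2)

noncomputable def specNorm {m n : Type*} [Fintype m] [Fintype n] [DecidableEq n]
    (A : Matrix m n ℝ) : ℝ :=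
  ‖LinearMap.toContinuousLinearMap (Matrix.toEuclideanLin A)‖

noncomputable def lamMax {n : Type*} [Fintype n] (A : Matrix n n ℝ) : ℝ :=
  sSup {r : ℝ | ∃ v : n → ℝ, v ≠ 0 ∧ A.mulVec v = r • v}

section Aux

open scoped Matrix.Norms.L2Operator RealInnerProductSpace

lemma specNorm_eq_l2norm {m n : Type*} [Fintype m] [Fintype n] [DecidableEq n]
    (A : Matrix m n ℝ) : specNorm A = ‖A‖ := rfl

lemma toEuclideanLin_mul_apply {m n k : Type*} [Fintype m] [Fintype n] [Fintype k]
    [DecidableEq n] [DecidableEq k] (A : Matrix m n ℝ) (B : Matrix n k ℝ)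
    (x : EuclideanSpace ℝ k) :
    toEuclideanLin (A * B) x = toEuclideanLin A (toEuclideanLin B x) := by
  simp [Matrix.toEuclideanLin_apply, Matrix.mulVec_mulVec]

lemma toEuclideanLin_one_apply {n : Type*} [Fintype n] [DecidableEq n]
    (x : EuclideanSpace ℝ n) :
    toEuclideanLin (1 : Matrix n n ℝ) x = x := by
  simp [Matrix.toEuclideanLin_apply]

lemma norm_toEuclideanLin_sq {m n : Type*} [Fintype m] [Fintype n] [DecidableEq n]
    [DecidableEq m] (A : Matrix m n ℝ) (x : EuclideanSpace ℝ n) :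
    ‖toEuclideanLin A x‖ ^ 2 = ⟪(toEuclideanLin (Aᵀ * A) x : EuclideanSpace ℝ n), x⟫ := by
  rw [toEuclideanLin_mul_apply, ← Matrix.conjTranspose_eq_transpose_of_trivial,
    Matrix.toEuclideanLin_conjTranspose_eq_adjoint, LinearMap.adjoint_inner_left,
    real_inner_self_eq_norm_sq]

lemma l2norm_le_of_forall {m n : Type*} [Fintype m] [Fintype n] [DecidableEq n]
    (A : Matrix m n ℝ) {c : ℝ} (hc : 0 ≤ c)
    (h : ∀ x : EuclideanSpace ℝ n, ‖toEuclideanLin A x‖ ≤ c * ‖x‖) : ‖A‖ ≤ c := by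
  rw [Matrix.l2_opNorm_def]
  exact ContinuousLinearMap.opNorm_le_bound _ hc h

variable {n r : ℕ} (P : Matrix (Fin (n - r)) (Fin r) ℝ)
  (S : Matrix (Fin r) (Fin r) ℝ)

lemma key_sq (hS : S.PosDef) (hSsq : S * S = 1 + Pᵀ * P) (x : EuclideanSpace ℝ (Fin r)) :
    ‖toEuclideanLin S x‖ ^ 2 = ‖x‖ ^ 2 + ‖toEuclideanLin P x‖ ^ 2 := by
  have hSym : Sᵀ = S := by
    rw [← Matrix.conjTranspose_eq_transpose_of_trivial]
    exact hS.isHermitian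
  rw [norm_toEuclideanLin_sq, hSym, hSsq, map_add, LinearMap.add_apply, inner_add_left,
    toEuclideanLin_one_apply, real_inner_self_eq_norm_sq, norm_toEuclideanLin_sq]

lemma norm_Sinv_le_one (hS : S.PosDef) (hSsq : S * S = 1 + Pᵀ * P) : ‖S⁻¹‖ ≤ 1 := by
  refine l2norm_le_of_forall _ zero_le_one fun x => ?_
  have hinv : S * S⁻¹ = 1 := Matrix.mul_nonsing_inv S (Matrix.isUnit_iff_isUnit_det S |>.1 hS.isUnit)
  have hx : toEuclideanLin S (toEuclideanLin S⁻¹ x) = x := by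
    rw [← toEuclideanLin_mul_apply, hinv, toEuclideanLin_one_apply]
  have hkey := key_sq P S hS hSsq (toEuclideanLin S⁻¹ x)
  rw [hx] at hkey
  rw [one_mul]
  nlinarith [norm_nonneg (toEuclideanLin S⁻¹ x), norm_nonneg x,
    norm_nonneg (toEuclideanLin P (toEuclideanLin S⁻¹ x)), sq_nonneg
    (‖toEuclideanLin P (toEuclideanLin S⁻¹ x)‖)]

lemma norm_PSinv_le_one (hS : S.PosDef) (hSsq : S * S = 1 + Pᵀ * P) : ‖P * S⁻¹‖ ≤ 1 := by
  refine l2norm_le_of_forall _ zero_le_one fun x => ?_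
  have hinv : S * S⁻¹ = 1 := Matrix.mul_nonsing_inv S (Matrix.isUnit_iff_isUnit_det S |>.1 hS.isUnit)
  have hx : toEuclideanLin S (toEuclideanLin S⁻¹ x) = x := by
    rw [← toEuclideanLin_mul_apply, hinv, toEuclideanLin_one_apply]
  have hkey := key_sq P S hS hSsq (toEuclideanLin S⁻¹ x)
  rw [hx] at hkey
  rw [toEuclideanLin_mul_apply, one_mul]
  nlinarith [norm_nonneg (toEuclideanLin S⁻¹ x), norm_nonneg x,
    norm_nonneg (toEuclideanLin P (toEuclideanLin S⁻¹ x)), sq_nonneg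
    (‖toEuclideanLin S⁻¹ x‖)]

lemma inner_toEuclideanLin_nonneg {k : Type*} [Fintype k] [DecidableEq k]
    {M : Matrix k k ℝ} (hM : M.PosSemidef) (y : EuclideanSpace ℝ k) :
    0 ≤ ⟪(toEuclideanLin M y : EuclideanSpace ℝ k), y⟫ := by
  have h := hM.dotProduct_mulVec_nonneg ((WithLp.equiv 2 (k → ℝ)) y)
  simp only [star_trivial] at h
  calc (0:ℝ) ≤ (WithLp.equiv 2 (k → ℝ)) y ⬝ᵥ M *ᵥ (WithLp.equiv 2 (k → ℝ)) y := h
  _ = ⟪(toEuclideanLin M y : EuclideanSpace ℝ k), y⟫ := by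
      rw [PiLp.inner_apply]
      simp only [Matrix.toEuclideanLin_apply, RCLike.inner_apply, conj_trivial]
      simp [dotProduct, mul_comm]

lemma norm_S1inv_le_one (hS : S.PosDef) : ‖(S + 1)⁻¹‖ ≤ 1 := by
  have hS1 : (S + 1).PosDef := hS.add_posSemidef Matrix.PosSemidef.one
  refine l2norm_le_of_forall _ zero_le_one fun x => ?_
  have hinv : (S + 1) * (S + 1)⁻¹ = 1 :=
    Matrix.mul_nonsing_inv _ (Matrix.isUnit_iff_isUnit_det _ |>.1 hS1.isUnit)
  set y := toEuclideanLin (S + 1)⁻¹ x with hy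
  have hx : toEuclideanLin S y + y = x := by
    have : toEuclideanLin (S + 1) y = x := by
      rw [hy, ← toEuclideanLin_mul_apply, hinv, toEuclideanLin_one_apply]
    rw [← this, map_add, LinearMap.add_apply, toEuclideanLin_one_apply]
  have hexp : ‖x‖ ^ 2 = ‖toEuclideanLin S y‖ ^ 2 + 2 * ⟪(toEuclideanLin S y : EuclideanSpace ℝ (Fin r)), y⟫ + ‖y‖ ^ 2 := by
    rw [← hx, norm_add_sq_real]
  have hpos := inner_toEuclideanLin_nonneg hS.posSemidef y
  rw [one_mul]
  nlinarith [norm_nonneg y, norm_nonneg x, sq_nonneg ‖toEuclideanLin S y‖]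

lemma norm_isometry_le_one {m k : Type*} [Fintype m] [Fintype k] [DecidableEq k]
    [DecidableEq m] {Q : Matrix m k ℝ} (hQ : Qᵀ * Q = 1) : ‖Q‖ ≤ 1 := by
  refine l2norm_le_of_forall _ zero_le_one fun x => ?_
  have h := norm_toEuclideanLin_sq Q x
  rw [hQ, toEuclideanLin_one_apply, real_inner_self_eq_norm_sq] at h
  rw [one_mul]
  nlinarith [norm_nonneg (toEuclideanLin Q x), norm_nonneg x]

end Aux

theorem spec_diff_le_two_specP {n r : ℕ}
    (Q1 : Matrix (Fin n) (Fin r) ℝ) (Q2 : Matrix (Fin n) (Fin (n - r)) ℝ)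
    (h1 : Q1ᵀ * Q1 = 1) (h2 : Q2ᵀ * Q2 = 1) (h12 : Q1ᵀ * Q2 = 0)
    (P : Matrix (Fin (n - r)) (Fin r) ℝ)
    (S : Matrix (Fin r) (Fin r) ℝ) (hS : S.PosDef) (hSsq : S * S = 1 + Pᵀ * P) :
    specNorm ((Q1 + Q2 * P) * S⁻¹ - Q1) ≤ 2 * specNorm P := by
  open scoped Matrix.Norms.L2Operator in
  rw [specNorm_eq_l2norm, specNorm_eq_l2norm]
  have hdetS : IsUnit S.det := Matrix.isUnit_iff_isUnit_det S |>.1 hS.isUnit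
  have hSinv : S * S⁻¹ = 1 := Matrix.mul_nonsing_inv S hdetS
  have hinvS : S⁻¹ * S = 1 := Matrix.nonsing_inv_mul S hdetS
  have hS1 : (S + 1).PosDef := hS.add_posSemidef Matrix.PosSemidef.one
  have hS1inv : (S + 1) * (S + 1)⁻¹ = 1 :=
    Matrix.mul_nonsing_inv _ (Matrix.isUnit_iff_isUnit_det _ |>.1 hS1.isUnit)
  -- decomposition
  have hdec : (Q1 + Q2 * P) * S⁻¹ - Q1 = Q1 * (S⁻¹ - 1) + Q2 * (P * S⁻¹) := by
    rw [Matrix.add_mul, Matrix.mul_sub, Matrix.mul_one, Matrix.mul_assoc]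
    abel
  -- identity for 1 - S⁻¹
  have hid : (1 : Matrix (Fin r) (Fin r) ℝ) - S⁻¹ = Pᵀ * ((P * S⁻¹) * (S + 1)⁻¹) := by
    have hmul : ((1 : Matrix (Fin r) (Fin r) ℝ) - S⁻¹) * ((S + 1) * S) = Pᵀ * P := by
      have e1 : ((S : Matrix (Fin r) (Fin r) ℝ) + 1) * S = S * S + S := by
        rw [Matrix.add_mul, Matrix.one_mul]
      rw [e1, Matrix.sub_mul, Matrix.one_mul, Matrix.mul_add, ← Matrix.mul_assoc, hinvS,
        Matrix.one_mul, hSsq]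
      abel
    have hN : ((S + 1) * S) * (S⁻¹ * (S + 1)⁻¹) = 1 := by
      rw [Matrix.mul_assoc, ← Matrix.mul_assoc S S⁻¹ _, hSinv, Matrix.one_mul, hS1inv]
    calc (1 : Matrix (Fin r) (Fin r) ℝ) - S⁻¹
        = ((1 - S⁻¹) * ((S + 1) * S)) * (S⁻¹ * (S + 1)⁻¹) := by
          rw [Matrix.mul_assoc, hN, Matrix.mul_one]
      _ = (Pᵀ * P) * (S⁻¹ * (S + 1)⁻¹) := by rw [hmul]
      _ = Pᵀ * ((P * S⁻¹) * (S + 1)⁻¹) := by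
          rw [Matrix.mul_assoc, Matrix.mul_assoc]
  have hnP : (0:ℝ) ≤ ‖P‖ := norm_nonneg _
  have hQ1 : ‖Q1‖ ≤ 1 := norm_isometry_le_one h1
  have hQ2 : ‖Q2‖ ≤ 1 := norm_isometry_le_one h2
  have hPt : ‖Pᵀ‖ = ‖P‖ := by
    rw [← Matrix.conjTranspose_eq_transpose_of_trivial, Matrix.l2_opNorm_conjTranspose]
  have hSinv1 : ‖S⁻¹‖ ≤ 1 := norm_Sinv_le_one P S hS hSsq
  have hPS1 : ‖P * S⁻¹‖ ≤ 1 := norm_PSinv_le_one P S hS hSsq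
  have hS11 : ‖(S + 1)⁻¹‖ ≤ 1 := norm_S1inv_le_one S hS
  -- bound for first summand
  have b1 : ‖Q1 * (S⁻¹ - 1)‖ ≤ ‖P‖ := by
    have hsub : ‖S⁻¹ - 1‖ ≤ ‖P‖ := by
      rw [norm_sub_rev, hid]
      calc ‖Pᵀ * ((P * S⁻¹) * (S + 1)⁻¹)‖
          ≤ ‖Pᵀ‖ * ‖(P * S⁻¹) * (S + 1)⁻¹‖ := Matrix.l2_opNorm_mul _ _
        _ ≤ ‖Pᵀ‖ * (‖P * S⁻¹‖ * ‖(S + 1)⁻¹‖) := by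
            refine mul_le_mul_of_nonneg_left (Matrix.l2_opNorm_mul _ _) (norm_nonneg _)
        _ ≤ ‖P‖ * (1 * 1) := by
            rw [hPt]
            exact mul_le_mul_of_nonneg_left
              (mul_le_mul hPS1 hS11 (norm_nonneg _) zero_le_one) hnP
        _ = ‖P‖ := by ring
    calc ‖Q1 * (S⁻¹ - 1)‖ ≤ ‖Q1‖ * ‖S⁻¹ - 1‖ := Matrix.l2_opNorm_mul _ _
      _ ≤ 1 * ‖P‖ := mul_le_mul hQ1 hsub (norm_nonneg _) zero_le_one
      _ = ‖P‖ := one_mul _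
  -- bound for second summand
  have b2 : ‖Q2 * (P * S⁻¹)‖ ≤ ‖P‖ := by
    calc ‖Q2 * (P * S⁻¹)‖ ≤ ‖Q2‖ * ‖P * S⁻¹‖ := Matrix.l2_opNorm_mul _ _
      _ ≤ ‖Q2‖ * (‖P‖ * ‖S⁻¹‖) := mul_le_mul_of_nonneg_left (Matrix.l2_opNorm_mul _ _) (norm_nonneg _)
      _ ≤ 1 * (‖P‖ * 1) := by
          refine mul_le_mul hQ2 ?_ (by positivity) zero_le_one
          exact mul_le_mul_of_nonneg_left hSinv1 hnP
      _ = ‖P‖ := by ring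
  calc ‖(Q1 + Q2 * P) * S⁻¹ - Q1‖ = ‖Q1 * (S⁻¹ - 1) + Q2 * (P * S⁻¹)‖ := by rw [hdec]
    _ ≤ ‖Q1 * (S⁻¹ - 1)‖ + ‖Q2 * (P * S⁻¹)‖ := norm_add_le _ _
    _ ≤ ‖P‖ + ‖P‖ := add_le_add b1 b2
    _ = 2 * ‖P‖ := by ring
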